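/- For any Boolean function f, log₂ Cᴾ(f) ≤ D(f) ≤ 3 log₂ Cᴾ(f), where Cᴾ(f) is the minimal number of leaves of a protocol tree computing f and D(f) is the minimal depth. -/

import Mathlib

/-- A two-party protocol tree: internal nodes are owned by Alice (`nodeA`,
labeled by a function of her input) or Bob (`nodeB`), leaves carry output bits. -/
inductive PTree (X Y : Type) : Type
  | leaf : Bool → PTree X Y
  | nodeA : (X → Bool) → PTree X Y → PTree X Y → PTree X Y
  | nodeB : (Y → Bool) → PTree X Y → PTree X Y → PTree X Y

namespace PTree
variable {X Y : Type}

/-- The output of the protocol on input pair `(x, y)`. -/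
def eval : PTree X Y → X → Y → Bool
  | leaf b, _, _ => b
  | nodeA g l r, x, y => if g x then eval r x y else eval l x y
  | nodeB g l r, x, y => if g y then eval r x y else eval l x y

/-- Depth of the protocol tree (worst-case number of bits communicated). -/
def depth : PTree X Y → ℕ
  | leaf _ => 0
  | nodeA _ l r => max (depth l) (depth r) + 1
  | nodeB _ l r => max (depth l) (depth r) + 1

/-- Total number of leaves. -/
def leaves : PTree X Y → ℕ
  | leaf _ => 1
  | nodeA _ l r => leaves l + leaves r
  | nodeB _ l r => leaves l + leaves r

/-- Number of leaves labeled `c`. -/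
def leavesLabeled (c : Bool) : PTree X Y → ℕ
  | leaf b => if b = c then 1 else 0
  | nodeA _ l r => leavesLabeled c l + leavesLabeled c r
  | nodeB _ l r => leavesLabeled c l + leavesLabeled c r

/-- The protocol tree computes `f`. -/
def Computes (T : PTree X Y) (f : X → Y → Bool) : Prop :=
  ∀ x y, T.eval x y = f x y

end PTree

/-- Deterministic communication complexity: minimal depth of a protocol tree computing `f`. -/
noncomputable def Dcc {X Y : Type} (f : X → Y → Bool) : ℕ :=
  sInf {d | ∃ T : PTree X Y, T.Computes f ∧ T.depth = d}

/-- Protocol partition number: minimal number of leaves of a protocol tree computing `f`. -/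
noncomputable def CP {X Y : Type} (f : X → Y → Bool) : ℕ :=
  sInf {c | ∃ T : PTree X Y, T.Computes f ∧ T.leaves = c}

/-- Minimal number of `1`-leaves of a protocol tree computing `f`. -/
noncomputable def C1P {X Y : Type} (f : X → Y → Bool) : ℕ :=
  sInf {c | ∃ T : PTree X Y, T.Computes f ∧ T.leavesLabeled true = c}

/-- Minimal number of `0`-leaves of a protocol tree computing `f`. -/
noncomputable def C0P {X Y : Type} (f : X → Y → Bool) : ℕ :=
  sInf {c | ∃ T : PTree X Y, T.Computes f ∧ T.leavesLabeled false = c}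

namespace PTree
variable {X Y : Type}

/-- Subtree at a path. -/
def subtreeAt : PTree X Y → List Bool → PTree X Y
  | t, [] => t
  | leaf b, _ :: _ => leaf b
  | nodeA _ l r, b :: p => subtreeAt (if b then r else l) p
  | nodeB _ l r, b :: p => subtreeAt (if b then r else l) p

/-- Replace the subtree at a path by a `false` leaf. -/
def prune : PTree X Y → List Bool → PTree X Y
  | _, [] => leaf false
  | leaf b, _ :: _ => leaf b
  | nodeA g l r, b :: p => if b then nodeA g l (prune r p) else nodeA g (prune l p) r
  | nodeB g l r, b :: p => if b then nodeB g l (prune r p) else nodeB g (prune l p) r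

/-- Alice's side of the condition "the run on `(x,y)` follows path `p`". -/
def reachA : PTree X Y → List Bool → X → Bool
  | _, [], _ => true
  | leaf _, _ :: _, _ => true
  | nodeA g l r, b :: p, x => (g x == b) && reachA (if b then r else l) p x
  | nodeB _ l r, b :: p, x => reachA (if b then r else l) p x

/-- Bob's side of the condition "the run on `(x,y)` follows path `p`". -/
def reachB : PTree X Y → List Bool → Y → Bool
  | _, [], _ => true
  | leaf _, _ :: _, _ => true
  | nodeA _ l r, b :: p, y => reachB (if b then r else l) p y
  | nodeB g l r, b :: p, y => (g y == b) && reachB (if b then r else l) p y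

/-- Largest number of leaves of a child. -/
def hsize : PTree X Y → ℕ
  | leaf _ => 0
  | nodeA _ l r => max (leaves l) (leaves r)
  | nodeB _ l r => max (leaves l) (leaves r)

lemma one_le_leaves : ∀ T : PTree X Y, 1 ≤ T.leaves
  | leaf _ => le_refl 1
  | nodeA _ l r => by have := one_le_leaves l; have := one_le_leaves r; simp [leaves]; omega
  | nodeB _ l r => by have := one_le_leaves l; have := one_le_leaves r; simp [leaves]; omega

lemma depth_lt_leaves : ∀ T : PTree X Y, T.depth < T.leaves
  | leaf _ => by simp [depth, leaves]
  | nodeA _ l r => by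
      have := depth_lt_leaves l; have := depth_lt_leaves r
      simp only [depth, leaves]; omega
  | nodeB _ l r => by
      have := depth_lt_leaves l; have := depth_lt_leaves r
      simp only [depth, leaves]; omega

lemma leaves_le_two_pow_depth : ∀ T : PTree X Y, T.leaves ≤ 2 ^ T.depth
  | leaf _ => le_refl 1
  | nodeA _ l r => by
      have hl := leaves_le_two_pow_depth l
      have hr := leaves_le_two_pow_depth r
      have h2l : (2:ℕ) ^ l.depth ≤ 2 ^ max l.depth r.depth :=
        Nat.pow_le_pow_right (by norm_num) (le_max_left _ _)
      have h2r : (2:ℕ) ^ r.depth ≤ 2 ^ max l.depth r.depth :=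
        Nat.pow_le_pow_right (by norm_num) (le_max_right _ _)
      simp only [depth, leaves, pow_succ]; omega
  | nodeB _ l r => by
      have hl := leaves_le_two_pow_depth l
      have hr := leaves_le_two_pow_depth r
      have h2l : (2:ℕ) ^ l.depth ≤ 2 ^ max l.depth r.depth :=
        Nat.pow_le_pow_right (by norm_num) (le_max_left _ _)
      have h2r : (2:ℕ) ^ r.depth ≤ 2 ^ max l.depth r.depth :=
        Nat.pow_le_pow_right (by norm_num) (le_max_right _ _)
      simp only [depth, leaves, pow_succ]; omega

lemma eval_subtreeAt : ∀ (T : PTree X Y) (p : List Bool) (x : X) (y : Y),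
    reachA T p x = true → reachB T p y = true →
    (subtreeAt T p).eval x y = T.eval x y := by
  intro T
  induction T with
  | leaf b => intro p x y _ _; cases p <;> rfl
  | nodeA g l r ihl ihr =>
    intro p x y hA hB
    cases p with
    | nil => rfl
    | cons b q =>
      simp only [reachA, Bool.and_eq_true, beq_iff_eq] at hA
      simp only [reachB] at hB
      obtain ⟨hgx, hA⟩ := hA
      cases b
      · simp only [if_false, Bool.false_eq] at hA hB hgx ⊢
        simp only [subtreeAt, if_false, eval, hgx, if_false]
        exact ihl q x y hA hB
      · simp only [if_true] at hA hB hgx ⊢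
        simp only [subtreeAt, if_true, eval, hgx, if_true]
        exact ihr q x y hA hB
  | nodeB g l r ihl ihr =>
    intro p x y hA hB
    cases p with
    | nil => rfl
    | cons b q =>
      simp only [reachA] at hA
      simp only [reachB, Bool.and_eq_true, beq_iff_eq] at hB
      obtain ⟨hgy, hB⟩ := hB
      cases b
      · simp only [if_false, Bool.false_eq] at hA hB hgy ⊢
        simp only [subtreeAt, if_false, eval, hgy, if_false]
        exact ihl q x y hA hB
      · simp only [if_true] at hA hB hgy ⊢
        simp only [subtreeAt, if_true, eval, hgy, if_true]
        exact ihr q x y hA hB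

lemma eval_prune : ∀ (T : PTree X Y) (p : List Bool) (x : X) (y : Y),
    ¬(reachA T p x = true ∧ reachB T p y = true) →
    (prune T p).eval x y = T.eval x y := by
  intro T
  induction T with
  | leaf b =>
    intro p x y h
    cases p with
    | nil => exact absurd ⟨rfl, rfl⟩ h
    | cons c q => rfl
  | nodeA g l r ihl ihr =>
    intro p x y h
    cases p with
    | nil => exact absurd ⟨rfl, rfl⟩ h
    | cons b q =>
      simp only [reachA, reachB, Bool.and_eq_true, beq_iff_eq, not_and] at h
      cases b
      · simp only [Bool.false_eq_true, if_false] at h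
        simp only [prune, Bool.false_eq_true, if_false, eval]
        by_cases hgx : g x = false
        · simp only [hgx, if_false]
          apply ihl
          intro hc
          exact (h ⟨hgx, hc.1⟩) hc.2
        · simp only [Bool.not_eq_false] at hgx
          simp [hgx]
      · simp only [if_true] at h
        simp only [prune, if_true, eval]
        by_cases hgx : g x = true
        · simp only [hgx, if_true]
          apply ihr
          intro hc
          exact (h ⟨hgx, hc.1⟩) hc.2
        · simp only [Bool.not_eq_true] at hgx
          simp [hgx]
  | nodeB g l r ihl ihr =>
    intro p x y h
    cases p with
    | nil => exact absurd ⟨rfl, rfl⟩ h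
    | cons b q =>
      simp only [reachA, reachB, Bool.and_eq_true, beq_iff_eq, not_and] at h
      cases b
      · simp only [Bool.false_eq_true, if_false] at h
        simp only [prune, Bool.false_eq_true, if_false, eval]
        by_cases hgy : g y = false
        · simp only [hgy, if_false]
          apply ihl
          intro hc
          exact h hc.1 hgy hc.2
        · simp only [Bool.not_eq_false] at hgy
          simp [hgy]
      · simp only [if_true] at h
        simp only [prune, if_true, eval]
        by_cases hgy : g y = true
        · simp only [hgy, if_true]
          apply ihr
          intro hc
          exact h hc.1 hgy hc.2
        · simp only [Bool.not_eq_true] at hgy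
          simp [hgy]

/-- Find a node whose subtree has at least `θ` leaves but whose children both have
fewer than `θ` leaves, together with the leaf-count bookkeeping for pruning. -/
lemma pick (θ : ℕ) (hθ : 1 ≤ θ) : ∀ T : PTree X Y, θ ≤ T.leaves →
    ∃ p : List Bool, θ ≤ (subtreeAt T p).leaves ∧ hsize (subtreeAt T p) < θ ∧
      (prune T p).leaves + (subtreeAt T p).leaves = T.leaves + 1 := by
  intro T
  induction T with
  | leaf b =>
    intro h
    refine ⟨[], ?_, ?_, ?_⟩
    · simpa [subtreeAt] using h
    · simp only [subtreeAt, hsize]; omega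
    · simp [subtreeAt, prune, leaves]
  | nodeA g l r ihl ihr =>
    intro h
    by_cases hl : θ ≤ l.leaves
    · obtain ⟨p, h1, h2, h3⟩ := ihl hl
      refine ⟨false :: p, ?_, ?_, ?_⟩
      · simpa [subtreeAt] using h1
      · simpa [subtreeAt] using h2
      · simp only [subtreeAt, prune, if_false, leaves, Bool.false_eq_true]
        omega
    · by_cases hr : θ ≤ r.leaves
      · obtain ⟨p, h1, h2, h3⟩ := ihr hr
        refine ⟨true :: p, ?_, ?_, ?_⟩
        · simpa [subtreeAt] using h1
        · simpa [subtreeAt] using h2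
        · simp only [subtreeAt, prune, if_true, leaves]
          omega
      · refine ⟨[], h, ?_, ?_⟩
        · simp only [subtreeAt, hsize]; omega
        · simp only [subtreeAt, prune, leaves]; omega
  | nodeB g l r ihl ihr =>
    intro h
    by_cases hl : θ ≤ l.leaves
    · obtain ⟨p, h1, h2, h3⟩ := ihl hl
      refine ⟨false :: p, ?_, ?_, ?_⟩
      · simpa [subtreeAt] using h1
      · simpa [subtreeAt] using h2
      · simp only [subtreeAt, prune, if_false, leaves, Bool.false_eq_true]
        omega
    · by_cases hr : θ ≤ r.leaves
      · obtain ⟨p, h1, h2, h3⟩ := ihr hr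
        refine ⟨true :: p, ?_, ?_, ?_⟩
        · simpa [subtreeAt] using h1
        · simpa [subtreeAt] using h2
        · simp only [subtreeAt, prune, if_true, leaves]
          omega
      · refine ⟨[], h, ?_, ?_⟩
        · simp only [subtreeAt, hsize]; omega
        · simp only [subtreeAt, prune, leaves]; omega

/-- Numeric core of the balancing argument. -/
lemma numeric_core (L c sl sr dP dl dr d : ℕ) (hL : 4 ≤ L)
    (hc : 2 * c ≤ L + 1) (hsl : 2 * sl ≤ L) (hsr : 2 * sr ≤ L)
    (hPb : (2:ℝ) ^ dP ≤ (c:ℝ) ^ 3) (hlb : (2:ℝ) ^ dl ≤ (sl:ℝ) ^ 3)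
    (hrb : (2:ℝ) ^ dr ≤ (sr:ℝ) ^ 3)
    (hd : d ≤ dP + 2 ∨ d ≤ dl + 3 ∨ d ≤ dr + 3) :
    (2:ℝ) ^ d ≤ (L:ℝ) ^ 3 := by
  have hLr : (4:ℝ) ≤ (L:ℝ) := by exact_mod_cast hL
  have hcr : (c:ℝ) ≤ ((L:ℝ) + 1) / 2 := by
    have : (2 * c : ℕ) ≤ (L + 1 : ℕ) := hc
    have := (Nat.cast_le (α := ℝ)).mpr this
    push_cast at this
    linarith
  have hslr : (sl:ℝ) ≤ (L:ℝ) / 2 := by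
    have : (2 * sl : ℕ) ≤ (L : ℕ) := hsl
    have := (Nat.cast_le (α := ℝ)).mpr this
    push_cast at this
    linarith
  have hsrr : (sr:ℝ) ≤ (L:ℝ) / 2 := by
    have : (2 * sr : ℕ) ≤ (L : ℕ) := hsr
    have := (Nat.cast_le (α := ℝ)).mpr this
    push_cast at this
    linarith
  have hc0 : (0:ℝ) ≤ (c:ℝ) := Nat.cast_nonneg _
  have hsl0 : (0:ℝ) ≤ (sl:ℝ) := Nat.cast_nonneg _
  have hsr0 : (0:ℝ) ≤ (sr:ℝ) := Nat.cast_nonneg _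
  have key1 : (2:ℝ) ^ (dP + 2) ≤ (L:ℝ) ^ 3 := by
    have h1 : (c:ℝ) ^ 3 ≤ (((L:ℝ) + 1) / 2) ^ 3 := pow_le_pow_left₀ hc0 hcr 3
    have := pow_pos (zero_lt_two (α := ℝ)) dP
    calc (2:ℝ) ^ (dP + 2) = 4 * 2 ^ dP := by ring
      _ ≤ 4 * (c:ℝ) ^ 3 := by linarith
      _ ≤ 4 * (((L:ℝ) + 1) / 2) ^ 3 := by linarith
      _ ≤ (L:ℝ) ^ 3 := by nlinarith [sq_nonneg ((L:ℝ) - 4), sq_nonneg (L:ℝ)]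
  have key2 : ∀ s ds : ℕ, (s:ℝ) ≤ (L:ℝ) / 2 → (0:ℝ) ≤ (s:ℝ) →
      (2:ℝ) ^ ds ≤ (s:ℝ) ^ 3 → (2:ℝ) ^ (ds + 3) ≤ (L:ℝ) ^ 3 := by
    intro s ds hs hs0 hb
    have h1 : (s:ℝ) ^ 3 ≤ ((L:ℝ) / 2) ^ 3 := pow_le_pow_left₀ hs0 hs 3
    have := pow_pos (zero_lt_two (α := ℝ)) ds
    calc (2:ℝ) ^ (ds + 3) = 8 * 2 ^ ds := by ring
      _ ≤ 8 * (s:ℝ) ^ 3 := by linarith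
      _ ≤ 8 * ((L:ℝ) / 2) ^ 3 := by linarith
      _ = (L:ℝ) ^ 3 := by ring
  rcases hd with hd | hd | hd
  · exact le_trans (pow_le_pow_right₀ one_le_two hd) key1
  · exact le_trans (pow_le_pow_right₀ one_le_two hd) (key2 sl dl hslr hsl0 hlb)
  · exact le_trans (pow_le_pow_right₀ one_le_two hd) (key2 sr dr hsrr hsr0 hrb)

/-- Every protocol tree can be rebalanced: there is a tree computing the same
function whose depth `d` satisfies `2^d ≤ L³` where `L` is the leaf count. -/
lemma balance : ∀ (n : ℕ) (T : PTree X Y), T.leaves = n →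
    ∃ T' : PTree X Y, (∀ x y, T'.eval x y = T.eval x y) ∧
      (2:ℝ) ^ T'.depth ≤ (T.leaves : ℝ) ^ 3 := by
  intro n
  induction n using Nat.strong_induction_on with
  | _ n ih =>
    intro T hT
    subst hT
    by_cases hL : T.leaves ≤ 3
    · refine ⟨T, fun _ _ => rfl, ?_⟩
      have hd := depth_lt_leaves T
      have h1 := one_le_leaves T
      have hmono : (2:ℝ) ^ T.depth ≤ (2:ℝ) ^ (T.leaves - 1) :=
        pow_le_pow_right₀ one_le_two (by omega)
      refine le_trans hmono ?_
      interval_cases h : T.leaves <;> norm_num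
    · push_neg at hL
      have hL4 : 4 ≤ T.leaves := hL
      set L := T.leaves with hLdef
      obtain ⟨p, hs, hh, hsum⟩ := pick (L / 2 + 1) (by omega) T (by omega)
      have hS2 : 2 ≤ (T.subtreeAt p).leaves := by omega
      have hprune_lt : (T.prune p).leaves < L := by omega
      obtain ⟨P', hPe, hPb⟩ := ih (T.prune p).leaves hprune_lt (T.prune p) rfl
      cases hSe : T.subtreeAt p with
      | leaf b =>
        rw [hSe] at hS2
        simp [leaves] at hS2
      | nodeA g tl tr =>
        have hhs : max tl.leaves tr.leaves < L / 2 + 1 := by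
          rw [hSe] at hh; simpa [hsize] using hh
        have hsl : tl.leaves < L := by
          have := one_le_leaves tl; have := one_le_leaves tr; omega
        have hsr : tr.leaves < L := by
          have := one_le_leaves tl; have := one_le_leaves tr; omega
        obtain ⟨tl', hle, hlb⟩ := ih tl.leaves (by omega) tl rfl
        obtain ⟨tr', hre, hrb⟩ := ih tr.leaves (by omega) tr rfl
        refine ⟨nodeA (fun x => T.reachA p x) P'
          (nodeB (fun y => T.reachB p y) P' (nodeA g tl' tr')), ?_, ?_⟩
        · intro x y
          by_cases hA : T.reachA p x = true
          · by_cases hB : T.reachB p y = true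
            · have := eval_subtreeAt T p x y hA hB
              rw [hSe] at this
              simp only [eval, hA, hB, if_true]
              rw [← this]
              simp only [eval]
              by_cases hg : g x = true <;> simp [hg, hle, hre]
            · simp only [eval, hA, if_true, Bool.not_eq_true] at hB ⊢
              simp only [hB, Bool.false_eq_true, if_false]
              rw [hPe x y]
              exact eval_prune T p x y (by rw [hB]; simp)
          · simp only [Bool.not_eq_true] at hA
            simp only [eval, hA, Bool.false_eq_true, if_false]
            rw [hPe x y]
            exact eval_prune T p x y (by rw [hA]; simp)
        · have hs' : L / 2 + 1 ≤ tl.leaves + tr.leaves := by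
            rw [hSe] at hs; simpa [leaves] using hs
          have hsum' : (T.prune p).leaves + (tl.leaves + tr.leaves) = L + 1 := by
            rw [hSe] at hsum; simpa [leaves] using hsum
          apply numeric_core L (T.prune p).leaves tl.leaves tr.leaves
            P'.depth tl'.depth tr'.depth _ hL4 (by omega) (by omega) (by omega)
            hPb hlb hrb
          simp only [depth]
          omega
      | nodeB g tl tr =>
        have hhs : max tl.leaves tr.leaves < L / 2 + 1 := by
          rw [hSe] at hh; simpa [hsize] using hh
        have hsl : tl.leaves < L := by
          have := one_le_leaves tl; have := one_le_leaves tr; omega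
        have hsr : tr.leaves < L := by
          have := one_le_leaves tl; have := one_le_leaves tr; omega
        obtain ⟨tl', hle, hlb⟩ := ih tl.leaves (by omega) tl rfl
        obtain ⟨tr', hre, hrb⟩ := ih tr.leaves (by omega) tr rfl
        refine ⟨nodeA (fun x => T.reachA p x) P'
          (nodeB (fun y => T.reachB p y) P' (nodeB g tl' tr')), ?_, ?_⟩
        · intro x y
          by_cases hA : T.reachA p x = true
          · by_cases hB : T.reachB p y = true
            · have := eval_subtreeAt T p x y hA hB
              rw [hSe] at this
              simp only [eval, hA, hB, if_true]
              rw [← this]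
              simp only [eval]
              by_cases hg : g y = true <;> simp [hg, hle, hre]
            · simp only [eval, hA, if_true, Bool.not_eq_true] at hB ⊢
              simp only [hB, Bool.false_eq_true, if_false]
              rw [hPe x y]
              exact eval_prune T p x y (by rw [hB]; simp)
          · simp only [Bool.not_eq_true] at hA
            simp only [eval, hA, Bool.false_eq_true, if_false]
            rw [hPe x y]
            exact eval_prune T p x y (by rw [hA]; simp)
        · have hs' : L / 2 + 1 ≤ tl.leaves + tr.leaves := by
            rw [hSe] at hs; simpa [leaves] using hs
          have hsum' : (T.prune p).leaves + (tl.leaves + tr.leaves) = L + 1 := by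
            rw [hSe] at hsum; simpa [leaves] using hsum
          apply numeric_core L (T.prune p).leaves tl.leaves tr.leaves
            P'.depth tl'.depth tr'.depth _ hL4 (by omega) (by omega) (by omega)
            hPb hlb hrb
          simp only [depth]
          omega

end PTree

/-- A trivial protocol tree computing `f` on all `x` in the given list. -/
def enumTree {X Y : Type} [DecidableEq X] (f : X → Y → Bool) : List X → PTree X Y
  | [] => PTree.leaf false
  | x₀ :: xs => PTree.nodeA (fun x => decide (x = x₀))
      (enumTree f xs) (PTree.nodeB (f x₀) (PTree.leaf false) (PTree.leaf true))

lemma enumTree_eval {X Y : Type} [DecidableEq X] (f : X → Y → Bool) :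
    ∀ (l : List X) (x : X) (y : Y), x ∈ l → (enumTree f l).eval x y = f x y := by
  intro l
  induction l with
  | nil => intro x y h; simp at h
  | cons x₀ xs ihx =>
    intro x y h
    by_cases hx : x = x₀
    · subst hx
      simp only [enumTree, PTree.eval, decide_eq_true_eq, if_pos rfl]
      by_cases hf : f x y = true <;> simp [hf]
    · have hmem : x ∈ xs := by
        rcases List.mem_cons.mp h with h' | h'
        · exact absurd h' hx
        · exact h'
      simp only [enumTree, PTree.eval, decide_eq_true_eq, if_neg hx]
      exact ihx x y hmem

/-- `log₂ Cᴾ(f) ≤ D(f) ≤ 3 log₂ Cᴾ(f)`. -/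
theorem logCP_le_D_le_three_logCP {X Y : Type} [Fintype X] [Fintype Y]
    [DecidableEq X] [DecidableEq Y] (f : X → Y → Bool) :
    Real.logb 2 (CP f) ≤ (Dcc f : ℝ) ∧ (Dcc f : ℝ) ≤ 3 * Real.logb 2 (CP f) := by
  -- a protocol tree computing `f` exists
  have hT₀ : (enumTree f (Finset.univ.toList : List X)).Computes f := by
    intro x y
    exact enumTree_eval f _ x y (by simp)
  have hDne : {d | ∃ T : PTree X Y, T.Computes f ∧ T.depth = d}.Nonempty :=
    ⟨_, _, hT₀, rfl⟩
  have hCne : {c | ∃ T : PTree X Y, T.Computes f ∧ T.leaves = c}.Nonempty :=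
    ⟨_, _, hT₀, rfl⟩
  obtain ⟨TD, hTDc, hTDd⟩ := Nat.sInf_mem hDne
  obtain ⟨TC, hTCc, hTCl⟩ := Nat.sInf_mem hCne
  have hCP1 : 1 ≤ CP f := by
    rw [CP, ← hTCl]; exact PTree.one_le_leaves TC
  have hCPpos : (0:ℝ) < (CP f : ℝ) := by exact_mod_cast hCP1
  constructor
  · -- CP f ≤ 2 ^ Dcc f
    have h1 : CP f ≤ 2 ^ Dcc f := by
      calc CP f ≤ TD.leaves := Nat.sInf_le ⟨TD, hTDc, rfl⟩
        _ ≤ 2 ^ TD.depth := PTree.leaves_le_two_pow_depth TD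
        _ = 2 ^ Dcc f := by rw [hTDd]; rfl
    have h1r : (CP f : ℝ) ≤ (2:ℝ) ^ Dcc f := by exact_mod_cast h1
    calc Real.logb 2 (CP f) ≤ Real.logb 2 ((2:ℝ) ^ Dcc f) :=
          Real.logb_le_logb_of_le one_lt_two hCPpos h1r
      _ = Dcc f := by
          rw [Real.logb_pow, Real.logb_self_eq_one (by norm_num)]
          ring
  · -- balance the leaf-optimal tree
    obtain ⟨T', hT'e, hT'b⟩ := PTree.balance TC.leaves TC rfl
    have hT'c : T'.Computes f := fun x y => (hT'e x y).trans (hTCc x y)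
    have hD : Dcc f ≤ T'.depth := Nat.sInf_le ⟨T', hT'c, rfl⟩
    have h2 : (2:ℝ) ^ Dcc f ≤ (CP f : ℝ) ^ 3 := by
      calc (2:ℝ) ^ Dcc f ≤ (2:ℝ) ^ T'.depth := pow_le_pow_right₀ one_le_two hD
        _ ≤ (TC.leaves : ℝ) ^ 3 := hT'b
        _ = (CP f : ℝ) ^ 3 := by rw [hTCl]; rfl
    have hpos : (0:ℝ) < (2:ℝ) ^ Dcc f := pow_pos two_pos _
    calc (Dcc f : ℝ) = Real.logb 2 ((2:ℝ) ^ Dcc f) := by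
          rw [Real.logb_pow, Real.logb_self_eq_one (by norm_num)]
          ring
      _ ≤ Real.logb 2 ((CP f : ℝ) ^ 3) :=
          Real.logb_le_logb_of_le one_lt_two hpos h2
      _ = 3 * Real.logb 2 (CP f) := by rw [Real.logb_pow]; norm_num
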